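/- Let ρ be a density matrix and let δ(ρ) ∈ ℝ^d denote the vector with entries √(ρ_{ii}). Then for every integer m ≥ 1, max_{ω ∈ N_m} F(ρ, ω) ≤ (1/m) ‖δ(ρ)‖_{[m]}², where N_m = { ω density matrix : ω_{ii} ≤ 1/m ∀i } and F is the fidelity. -/

import Mathlib

open Matrix BigOperators Complex ComplexOrder

noncomputable section
set_option linter.unusedSectionVars false
set_option maxHeartbeats 1000000

variable {ι : Type*} [Fintype ι] [DecidableEq ι]

/-- A density matrix: positive semidefinite with unit trace. -/
def IsDensityMatrix (ρ : Matrix ι ι ℂ) : Prop := ρ.PosSemidef ∧ ρ.trace = 1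

/-- The rank-one projector |ψ⟩⟨ψ| associated to a vector. -/
def pureState (ψ : ι → ℂ) : Matrix ι ι ℂ := Matrix.of fun i j => ψ i * (starRingEnd ℂ) (ψ j)

/-- The square root of a positive semidefinite matrix, as `Matrix.PosSemidef.sqrt` was defined
in the older Mathlib. -/
def psdSqrt {A : Matrix ι ι ℂ} (hA : A.PosSemidef) : Matrix ι ι ℂ :=
  (hA.1.eigenvectorUnitary : Matrix ι ι ℂ) * diagonal ((↑) ∘ Real.sqrt ∘ hA.1.eigenvalues) *
    (star (hA.1.eigenvectorUnitary : Matrix ι ι ℂ))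

/-- The trace norm ‖A‖₁ = Tr √(AᴴA). -/
def traceNorm (A : Matrix ι ι ℂ) : ℝ :=
  ((psdSqrt (Matrix.posSemidef_conjTranspose_mul_self A)).trace).re

open Classical in
/-- Matrix square root (junk value 0 on matrices that are not PSD). -/
def matSqrt (A : Matrix ι ι ℂ) : Matrix ι ι ℂ := if h : A.PosSemidef then psdSqrt h else 0

/-- Fidelity F(ρ,σ) = ‖√ρ√σ‖₁². -/
def fidelity (ρ σ : Matrix ι ι ℂ) : ℝ := (traceNorm (matSqrt ρ * matSqrt σ))^2

/-- The dephasing map Δ, keeping only the diagonal. -/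
def deph (ρ : Matrix ι ι ℂ) : Matrix ι ι ℂ := Matrix.diagonal (fun i => ρ i i)

/-- The m-distillation norm ‖ψ‖_{[m]} = min_x (‖ψ-x‖₁ + √m ‖x‖₂). -/
def distNorm (m : ℕ) (ψ : ι → ℂ) : ℝ :=
  ⨅ x : ι → ℂ, ((∑ i, ‖ψ i - x i‖) +
    Real.sqrt m * Real.sqrt (∑ i, ‖x i‖^2))

/-- M_m: convex combinations of pure states with ℓ∞ norm at most 1/√m. -/
def Mset (m : ℕ) : Set (Matrix ι ι ℂ) :=
  {ω | ∃ (n : ℕ) (p : Fin n → ℝ) (ψ : Fin n → ι → ℂ),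
    (∀ i, 0 ≤ p i) ∧ (∑ i, p i = 1) ∧
    (∀ i, ∑ j, ‖ψ i j‖^2 = 1) ∧
    (∀ i j, ‖ψ i j‖ ≤ 1 / Real.sqrt m) ∧
    ω = ∑ i, p i • pureState (ψ i)}

/-- N_m: density matrices with all diagonal entries at most 1/m. -/
def Nset (m : ℕ) : Set (Matrix ι ι ℂ) :=
  {ω | IsDensityMatrix ω ∧ ∀ i, (ω i i).re ≤ 1 / m}

/-- Optimal fidelity of assisted distillation F_A(ρ,m) = max_{ω ∈ M_m} F(ρ,ω). -/
def FA (ρ : Matrix ι ι ℂ) (m : ℕ) : ℝ :=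
  sSup {r : ℝ | ∃ ω ∈ Mset (ι := ι) m, r = fidelity ρ ω}



namespace Stmt11Aux

def n2 (x : ι → ℂ) : ℝ := ∑ i, Complex.normSq (x i)

lemma dot_self_re (x : ι → ℂ) : (star x ⬝ᵥ x).re = n2 x := by
  simp only [dotProduct, Pi.star_apply, Complex.re_sum, n2]
  congr 1; funext i
  simp [Complex.normSq_apply, Complex.mul_re]

lemma cs (a b : ι → ℂ) :
    ‖star a ⬝ᵥ b‖ ≤ Real.sqrt (n2 a) * Real.sqrt (n2 b) := by
  have h1 : ‖star a ⬝ᵥ b‖ ≤ ∑ i, ‖a i‖ * ‖b i‖ := by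
    refine (norm_sum_le _ _).trans_eq ?_
    congr 1; funext i
    simp [_root_.map_mul]
  refine h1.trans ?_
  have h2 := Real.sum_mul_le_sqrt_mul_sqrt Finset.univ
    (fun i => ‖a i‖) (fun i => ‖b i‖)
  refine h2.trans_eq ?_
  rw [n2, n2]
  congr 2 <;> · congr 1; funext i; rw [Complex.sq_norm]

lemma dot_sandwich (V : Matrix ι ι ℂ) (p : ι → ℝ) (x : ι → ℂ) :
    star x ⬝ᵥ ((V * diagonal (fun i => (p i : ℂ)) * Vᴴ) *ᵥ x)
      = ∑ i, (p i : ℂ) * Complex.normSq ((Vᴴ *ᵥ x) i) := by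
  set z := Vᴴ *ᵥ x with hz
  rw [mul_assoc, ← mulVec_mulVec, dotProduct_mulVec]
  have hxv : star x ᵥ* V = star z := by
    rw [hz, star_mulVec, conjTranspose_conjTranspose]
  rw [hxv, ← mulVec_mulVec, ← hz]
  simp only [dotProduct, mulVec_diagonal, Pi.star_apply]
  congr 1; funext i
  rw [Complex.normSq_eq_conj_mul_self]
  simp only [RCLike.star_def]
  ring

lemma sandwich_bound (V : Matrix ι ι ℂ) (hV : V * Vᴴ = 1) (p : ι → ℝ)
    (hp1 : ∀ i, p i ≤ 1) (x : ι → ℂ) :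
    (star x ⬝ᵥ ((V * diagonal (fun i => (p i : ℂ)) * Vᴴ) *ᵥ x)).re ≤ n2 x := by
  rw [dot_sandwich]
  have h1 : (∑ i, (p i : ℂ) * Complex.normSq ((Vᴴ *ᵥ x) i)).re
      = ∑ i, p i * Complex.normSq ((Vᴴ *ᵥ x) i) := by
    rw [Complex.re_sum]; congr 1; funext i
    rw [← Complex.ofReal_mul, Complex.ofReal_re]
  rw [h1]
  have h2 : ∑ i, p i * Complex.normSq ((Vᴴ *ᵥ x) i) ≤ ∑ i, Complex.normSq ((Vᴴ *ᵥ x) i) := by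
    apply Finset.sum_le_sum
    intro i _
    calc p i * Complex.normSq ((Vᴴ *ᵥ x) i) ≤ 1 * Complex.normSq ((Vᴴ *ᵥ x) i) :=
      mul_le_mul_of_nonneg_right (hp1 i) (Complex.normSq_nonneg _)
    _ = _ := one_mul _
  refine h2.trans_eq ?_
  have h3 : (∑ i, Complex.normSq ((Vᴴ *ᵥ x) i)) = n2 (Vᴴ *ᵥ x) := rfl
  rw [h3, ← dot_self_re, ← dot_self_re]
  congr 1
  rw [star_mulVec, conjTranspose_conjTranspose, dotProduct_mulVec, vecMul_vecMul]
  rw [hV, vecMul_one]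

lemma key (B C : Matrix ι ι ℂ) (hB : B.IsHermitian) (hC : C.IsHermitian) :
    traceNorm (B * C) ≤
      ∑ i, Real.sqrt (((B * B) i i).re) * Real.sqrt (((C * C) i i).re) := by
  classical
  set A := B * C with hA
  have hH : (Aᴴ * A).PosSemidef := posSemidef_conjTranspose_mul_self A
  set V : Matrix ι ι ℂ := ↑(hH.1.eigenvectorUnitary) with hVdef
  have hV1 : Vᴴ * V = 1 := by
    have h := hH.1.eigenvectorUnitary.2
    rw [Matrix.mem_unitaryGroup_iff'] at h
    simpa [Matrix.star_eq_conjTranspose] using h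
  have hV2 : V * Vᴴ = 1 := by
    have h := hH.1.eigenvectorUnitary.2
    rw [Matrix.mem_unitaryGroup_iff] at h
    simpa [Matrix.star_eq_conjTranspose] using h
  set μ := hH.1.eigenvalues with hμdef
  have hμ0 : ∀ i, 0 ≤ μ i := hH.eigenvalues_nonneg
  set g : ι → ℝ := fun i => if μ i = 0 then 0 else (Real.sqrt (μ i))⁻¹ with hgdef
  have hprod : ∀ f h : ι → ℝ,
      (V * diagonal (fun i => (f i : ℂ)) * Vᴴ) * (V * diagonal (fun i => (h i : ℂ)) * Vᴴ)
      = V * diagonal (fun i => ((f i * h i : ℝ) : ℂ)) * Vᴴ := by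
    intro f h
    have e1 : Vᴴ * (V * (diagonal (fun i => (h i : ℂ)) * Vᴴ))
        = diagonal (fun i => (h i : ℂ)) * Vᴴ := by
      rw [← mul_assoc, hV1, one_mul]
    simp only [mul_assoc]
    rw [e1, ← mul_assoc (diagonal _), diagonal_mul_diagonal]
    congr 2
    funext i
    push_cast
    ring
  have hspec : Aᴴ * A = V * diagonal (fun i => (μ i : ℂ)) * Vᴴ := by
    have h := hH.1.spectral_theorem
    rw [Unitary.conjStarAlgAut_apply] at h
    exact h
  have hsqrt : psdSqrt hH = V * diagonal (fun i => (Real.sqrt (μ i) : ℂ)) * Vᴴ := rfl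
  set E := V * diagonal (fun i => (g i : ℂ)) * Vᴴ with hEdef
  set U := A * E with hUdef
  have hgμ : ∀ i, g i * μ i = Real.sqrt (μ i) := by
    intro i
    by_cases h : μ i = 0
    · simp [hgdef, h]
    · have hpos : 0 < μ i := lt_of_le_of_ne (hμ0 i) (Ne.symm h)
      have hs : Real.sqrt (μ i) ≠ 0 := ne_of_gt (Real.sqrt_pos.mpr hpos)
      rw [hgdef]
      simp only [if_neg h]
      rw [inv_mul_eq_div, div_eq_iff hs, Real.mul_self_sqrt (hμ0 i)]
  have hdstar : (star fun i => ((g i : ℝ) : ℂ)) = fun i => ((g i : ℝ) : ℂ) := by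
    funext i; simp
  have hEH : E * (Aᴴ * A) = psdSqrt hH := by
    rw [hsqrt]
    calc E * (Aᴴ * A)
        = (V * diagonal (fun i => ((g i : ℝ) : ℂ)) * Vᴴ)
          * (V * diagonal (fun i => ((μ i : ℝ) : ℂ)) * Vᴴ) := by rw [hEdef, hspec]
      _ = V * diagonal (fun i => ((g i * μ i : ℝ) : ℂ)) * Vᴴ := hprod g μ
      _ = V * diagonal (fun i => ((Real.sqrt (μ i) : ℝ) : ℂ)) * Vᴴ := by
          have : (fun i => ((g i * μ i : ℝ) : ℂ)) = fun i => ((Real.sqrt (μ i) : ℝ) : ℂ) := by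
            funext i; rw [hgμ i]
          rw [this]
  have hEherm : Eᴴ = E := by
    rw [hEdef, conjTranspose_mul, conjTranspose_mul, conjTranspose_conjTranspose,
      diagonal_conjTranspose, hdstar, mul_assoc]
  have htr : traceNorm A = ((B * (U * C)).trace).re := by
    have h0 : traceNorm A = ((psdSqrt hH).trace).re := rfl
    have hAH : Aᴴ = C * B := by rw [hA, conjTranspose_mul, hB.eq, hC.eq]
    have h2 : (E * (Aᴴ * A)).trace = (B * (U * C)).trace :=
      calc (E * (Aᴴ * A)).trace = ((Aᴴ * A) * E).trace := trace_mul_comm _ _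
        _ = (Aᴴ * (A * E)).trace := by rw [mul_assoc]
        _ = ((A * E) * Aᴴ).trace := trace_mul_comm _ _
        _ = ((U * C) * B).trace := by rw [hAH, hUdef]; simp only [mul_assoc]
        _ = (B * (U * C)).trace := trace_mul_comm _ _
    rw [h0, ← hEH, h2]
  have hUU : Uᴴ * U = V * diagonal (fun i => ((g i * (μ i * g i) : ℝ) : ℂ)) * Vᴴ := by
    have h1 : Uᴴ * U = E * ((Aᴴ * A) * E) := by
      rw [hUdef, conjTranspose_mul, hEherm, mul_assoc, ← mul_assoc Aᴴ A E]
    rw [h1, hspec, hEdef, hprod μ g, hprod g (fun i => μ i * g i)]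
  have hp1 : ∀ i, g i * (μ i * g i) ≤ 1 := by
    intro i
    by_cases h : μ i = 0
    · simp [hgdef, h]
    · have hpos : 0 < μ i := lt_of_le_of_ne (hμ0 i) (Ne.symm h)
      have hs : 0 < Real.sqrt (μ i) := Real.sqrt_pos.mpr hpos
      have : g i * (μ i * g i) = 1 := by
        have h2 : g i * (μ i * g i) = (g i * μ i) * g i := by ring
        rw [h2, hgμ i, hgdef]
        simp only [if_neg h]
        exact mul_inv_cancel₀ (ne_of_gt hs)
      exact le_of_eq this
  have hcontr : ∀ x : ι → ℂ, n2 (U *ᵥ x) ≤ n2 x := by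
    intro x
    have h1 : n2 (U *ᵥ x) = (star x ⬝ᵥ ((Uᴴ * U) *ᵥ x)).re := by
      rw [← dot_self_re]
      congr 1
      rw [star_mulVec]
      conv_rhs => rw [← mulVec_mulVec, dotProduct_mulVec]
    rw [h1, hUU]
    exact sandwich_bound V hV2 _ hp1 x
  have hfin : ((B * (U * C)).trace).re
      ≤ ∑ i, Real.sqrt (((B * B) i i).re) * Real.sqrt (((C * C) i i).re) := by
    rw [Matrix.trace, Complex.re_sum]
    apply Finset.sum_le_sum
    intro i _
    have hdot : (B * (U * C)).diag i = star (fun k => B k i) ⬝ᵥ (U *ᵥ (fun k => C k i)) := by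
      simp only [Matrix.diag, mul_apply, dotProduct, mulVec, Pi.star_apply]
      congr 1; funext k
      rw [hB.apply i k]
    have hbb : n2 (fun k => B k i) = ((B * B) i i).re := by
      simp only [n2, mul_apply, Complex.re_sum]
      congr 1; funext k
      rw [← hB.apply i k]
      simp [Complex.normSq_apply, Complex.mul_re]
    have hcc : n2 (fun k => C k i) = ((C * C) i i).re := by
      simp only [n2, mul_apply, Complex.re_sum]
      congr 1; funext k
      rw [← hC.apply i k]
      simp [Complex.normSq_apply, Complex.mul_re]
    calc ((B * (U * C)).diag i).re
        ≤ ‖star (fun k => B k i) ⬝ᵥ (U *ᵥ (fun k => C k i))‖ := by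
          rw [hdot]; exact Complex.re_le_norm _
      _ ≤ Real.sqrt (n2 (fun k => B k i)) * Real.sqrt (n2 (U *ᵥ (fun k => C k i))) := cs _ _
      _ ≤ Real.sqrt (n2 (fun k => B k i)) * Real.sqrt (n2 (fun k => C k i)) := by
          apply mul_le_mul_of_nonneg_left _ (Real.sqrt_nonneg _)
          exact Real.sqrt_le_sqrt (hcontr _)
      _ = Real.sqrt (((B * B) i i).re) * Real.sqrt (((C * C) i i).re) := by rw [hbb, hcc]
  rw [htr]
  exact hfin


lemma psd_diag_re_nonneg {M : Matrix ι ι ℂ} (hM : M.PosSemidef) (i : ι) : 0 ≤ (M i i).re := by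
  have h := hM.re_dotProduct_nonneg (Pi.single i 1)
  simpa [dotProduct, mulVec, Pi.single_apply, Finset.sum_ite_eq, Finset.sum_ite_eq'] using h

lemma psdSqrt_psd {A : Matrix ι ι ℂ} (hA : A.PosSemidef) : (psdSqrt hA).PosSemidef := by
  unfold psdSqrt
  rw [Matrix.star_eq_conjTranspose]
  apply PosSemidef.mul_mul_conjTranspose_same
  apply PosSemidef.diagonal
  intro i
  simp [Real.sqrt_nonneg]

lemma psdSqrt_mul_self {A : Matrix ι ι ℂ} (hA : A.PosSemidef) : psdSqrt hA * psdSqrt hA = A := by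
  have hU : star (hA.1.eigenvectorUnitary : Matrix ι ι ℂ) *
      (hA.1.eigenvectorUnitary : Matrix ι ι ℂ) = 1 :=
    Unitary.star_mul_self_of_mem hA.1.eigenvectorUnitary.2
  have h := hA.1.spectral_theorem
  rw [Unitary.conjStarAlgAut_apply] at h
  unfold psdSqrt
  conv_rhs => rw [h]
  simp only [mul_assoc]
  rw [← mul_assoc (star _), hU, one_mul, ← mul_assoc (diagonal _), diagonal_mul_diagonal]
  congr 3; funext i
  simp [← Complex.ofReal_mul, Real.mul_self_sqrt (hA.eigenvalues_nonneg i)]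

lemma traceNorm_nonneg (A : Matrix ι ι ℂ) : 0 ≤ traceNorm A := by
  have h := psdSqrt_psd (Matrix.posSemidef_conjTranspose_mul_self A)
  rw [traceNorm, Matrix.trace, Complex.re_sum]
  exact Finset.sum_nonneg fun i _ => psd_diag_re_nonneg h i

end Stmt11Aux

open Stmt11Aux in
theorem stmt11 {d : ℕ} (ρ : Matrix (Fin d) (Fin d) ℂ) (hρ : IsDensityMatrix ρ)
    (m : ℕ) (hm : 1 ≤ m) :
    ∀ ω ∈ Nset (ι := Fin d) m, fidelity ρ ω ≤
      (1 / m) * (distNorm m (fun i => (Real.sqrt (ρ i i).re : ℂ)))^2 := by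
  intro ω hω
  obtain ⟨⟨hωpsd, hωtr⟩, hωdiag⟩ := hω
  obtain ⟨hρpsd, hρtr⟩ := hρ
  have hBs : matSqrt ρ = psdSqrt hρpsd := dif_pos hρpsd
  have hCs : matSqrt ω = psdSqrt hωpsd := dif_pos hωpsd
  have hB : (matSqrt ρ).IsHermitian := by rw [hBs]; exact (psdSqrt_psd hρpsd).1
  have hC : (matSqrt ω).IsHermitian := by rw [hCs]; exact (psdSqrt_psd hωpsd).1
  have hBB : matSqrt ρ * matSqrt ρ = ρ := by rw [hBs]; exact psdSqrt_mul_self hρpsd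
  have hCC : matSqrt ω * matSqrt ω = ω := by rw [hCs]; exact psdSqrt_mul_self hωpsd
  have hkey := key (matSqrt ρ) (matSqrt ω) hB hC
  rw [hBB, hCC] at hkey
  have hρd : ∀ i, 0 ≤ (ρ i i).re := fun i => psd_diag_re_nonneg hρpsd i
  have hωd : ∀ i, 0 ≤ (ω i i).re := fun i => psd_diag_re_nonneg hωpsd i
  have hs0 : 0 ≤ ∑ i, Real.sqrt (ρ i i).re * Real.sqrt (ω i i).re :=
    Finset.sum_nonneg fun i _ => mul_nonneg (Real.sqrt_nonneg _) (Real.sqrt_nonneg _)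
  have hmpos : (0:ℝ) < (m:ℝ) := by
    have : (1:ℝ) ≤ (m:ℝ) := by exact_mod_cast hm
    linarith
  have hsqm : 0 < Real.sqrt m := Real.sqrt_pos.mpr hmpos
  have hvsum : ∑ i, (Real.sqrt (ω i i).re)^2 = 1 := by
    have h1 : ∀ i : Fin d, (Real.sqrt (ω i i).re)^2 = (ω i i).re :=
      fun i => Real.sq_sqrt (hωd i)
    rw [Finset.sum_congr rfl (fun i _ => h1 i)]
    have h2 : (∑ i, (ω i i).re) = (ω.trace).re := by
      rw [Matrix.trace, Complex.re_sum]; rfl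
    rw [h2, hωtr, Complex.one_re]
  have hvle : ∀ i, Real.sqrt (ω i i).re ≤ 1 / Real.sqrt m := by
    intro i
    calc Real.sqrt (ω i i).re ≤ Real.sqrt (1 / m) := Real.sqrt_le_sqrt (hωdiag i)
      _ = 1 / Real.sqrt m := by rw [one_div, Real.sqrt_inv, one_div]
  have hlow : ∀ x : Fin d → ℂ,
      Real.sqrt m * ∑ i, Real.sqrt (ρ i i).re * Real.sqrt (ω i i).re ≤
      (∑ i, ‖(Real.sqrt (ρ i i).re : ℂ) - x i‖) +
        Real.sqrt m * Real.sqrt (∑ i, ‖x i‖^2) := by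
    intro x
    have step1 : ∑ i, Real.sqrt (ρ i i).re * Real.sqrt (ω i i).re ≤
        ∑ i, (‖(Real.sqrt (ρ i i).re : ℂ) - x i‖ * Real.sqrt (ω i i).re
          + ‖x i‖ * Real.sqrt (ω i i).re) := by
      apply Finset.sum_le_sum
      intro i _
      have habs : Real.sqrt (ρ i i).re ≤
          ‖(Real.sqrt (ρ i i).re : ℂ) - x i‖ + ‖x i‖ := by
        calc Real.sqrt (ρ i i).re = ‖(Real.sqrt (ρ i i).re : ℂ)‖ := by
              rw [Complex.norm_real, Real.norm_eq_abs, _root_.abs_of_nonneg (Real.sqrt_nonneg _)]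
          _ = ‖((Real.sqrt (ρ i i).re : ℂ) - x i) + x i‖ := by ring_nf
          _ ≤ _ := norm_add_le _ _
      calc Real.sqrt (ρ i i).re * Real.sqrt (ω i i).re
          ≤ (‖(Real.sqrt (ρ i i).re : ℂ) - x i‖ + ‖x i‖)
              * Real.sqrt (ω i i).re :=
            mul_le_mul_of_nonneg_right habs (Real.sqrt_nonneg _)
        _ = _ := by ring
    rw [Finset.sum_add_distrib] at step1
    have step2 : ∑ i, ‖(Real.sqrt (ρ i i).re : ℂ) - x i‖ * Real.sqrt (ω i i).re ≤
        (1 / Real.sqrt m) * ∑ i, ‖(Real.sqrt (ρ i i).re : ℂ) - x i‖ := by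
      rw [Finset.mul_sum]
      apply Finset.sum_le_sum
      intro i _
      rw [mul_comm (1 / Real.sqrt m)]
      exact mul_le_mul_of_nonneg_left (hvle i) (norm_nonneg _)
    have step3 : ∑ i, ‖x i‖ * Real.sqrt (ω i i).re ≤
        Real.sqrt (∑ i, ‖x i‖^2) := by
      have h := Real.sum_mul_le_sqrt_mul_sqrt Finset.univ
        (fun i => ‖x i‖) (fun i => Real.sqrt (ω i i).re)
      rw [hvsum, Real.sqrt_one, mul_one] at h
      exact h
    have hc : ∑ i, Real.sqrt (ρ i i).re * Real.sqrt (ω i i).re ≤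
        (1 / Real.sqrt m) * (∑ i, ‖(Real.sqrt (ρ i i).re : ℂ) - x i‖) +
          Real.sqrt (∑ i, ‖x i‖^2) := by linarith
    calc Real.sqrt m * ∑ i, Real.sqrt (ρ i i).re * Real.sqrt (ω i i).re
        ≤ Real.sqrt m * ((1 / Real.sqrt m) *
            (∑ i, ‖(Real.sqrt (ρ i i).re : ℂ) - x i‖) +
            Real.sqrt (∑ i, ‖x i‖^2)) :=
          mul_le_mul_of_nonneg_left hc (le_of_lt hsqm)
      _ = _ := by
          rw [mul_add, ← mul_assoc, mul_one_div, div_self (ne_of_gt hsqm), one_mul]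
  have hdist : Real.sqrt m * ∑ i, Real.sqrt (ρ i i).re * Real.sqrt (ω i i).re ≤
      distNorm m (fun i => (Real.sqrt (ρ i i).re : ℂ)) := by
    rw [distNorm]
    exact le_ciInf hlow
  have h1 : fidelity ρ ω ≤ (∑ i, Real.sqrt (ρ i i).re * Real.sqrt (ω i i).re)^2 := by
    rw [fidelity]
    exact pow_le_pow_left₀ (traceNorm_nonneg _) hkey 2
  have hd0 : 0 ≤ Real.sqrt m * ∑ i, Real.sqrt (ρ i i).re * Real.sqrt (ω i i).re :=
    mul_nonneg hsqm.le hs0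
  have h2 := pow_le_pow_left₀ hd0 hdist 2
  have hms : (Real.sqrt m * ∑ i, Real.sqrt (ρ i i).re * Real.sqrt (ω i i).re)^2
      = (m:ℝ) * (∑ i, Real.sqrt (ρ i i).re * Real.sqrt (ω i i).re)^2 := by
    rw [mul_pow, Real.sq_sqrt hmpos.le]
  rw [hms] at h2
  have h3 : (∑ i, Real.sqrt (ρ i i).re * Real.sqrt (ω i i).re)^2 ≤
      (1 / (m:ℝ)) * (distNorm m (fun i => (Real.sqrt (ρ i i).re : ℂ)))^2 := by
    rw [div_mul_eq_mul_div, one_mul, le_div_iff₀ hmpos, mul_comm]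
    exact h2
  exact h1.trans h3

end
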